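/- Let P be a nonempty polyhedral set in ℝ^d, G ⊊ H faces of P, x = x_1 + x_2 with x_1 ∈ relint G and x_2 ∈ -relint N(P,H). Set L_3 = L(G)^⊥ ∩ L(H), and for a face F with G ⊆ F ⊆ H let F* = pos((F - x_1) ∩ L(G)^⊥) and H* = pos((H - x_1) ∩ L(G)^⊥). Then there exists ε > 0 such that for all w ∈ L_3 with ‖w‖ ≤ ε: x + w ∈ F - N(P,F) if and only if w ∈ F* - N_{L_3}(H*, F*). -/

import Mathlib

open RealInnerProductSpace Pointwise

noncomputable section

abbrev Euc (d : ℕ) := EuclideanSpace ℝ (Fin d)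

/-- A polyhedral set: intersection of finitely many closed half-spaces. -/
def IsPolyhedral {d : ℕ} (P : Set (Euc d)) : Prop :=
  ∃ s : Finset (Euc d × ℝ), P = {x | ∀ h ∈ s, ⟪h.1, x⟫ ≤ h.2}

/-- A (nonempty) face of a convex set: a nonempty convex extreme subset. -/
def IsFaceOf {d : ℕ} (P F : Set (Euc d)) : Prop :=
  F.Nonempty ∧ Convex ℝ F ∧ IsExtreme ℝ P F

/-- The normal cone of `P` at the face `F`. -/
def normalCone {d : ℕ} (P F : Set (Euc d)) : Set (Euc d) :=
  {u | ∀ f ∈ F, ∀ z ∈ P, ⟪u, z - f⟫ ≤ 0}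

/-- The dimension of a set: the rank of the direction of its affine hull. -/
def sdim {d : ℕ} (F : Set (Euc d)) : ℕ :=
  Module.finrank ℝ (affineSpan ℝ F).direction

/-- φ_P(x) = Σ_{F face of P} (-1)^{dim F} 1_{F - N(P,F)}(x). -/
def phi {d : ℕ} (P : Set (Euc d)) (x : Euc d) : ℤ :=
  ∑ᶠ F ∈ {F : Set (Euc d) | IsFaceOf P F},
    (-1 : ℤ) ^ sdim F * (F - normalCone P F).indicator (fun _ => (1 : ℤ)) x

/-- A set is line-free if it contains no affine line. -/
def LineFree {d : ℕ} (P : Set (Euc d)) : Prop :=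
  ∀ x y : Euc d, y ≠ 0 → ∃ t : ℝ, x + t • y ∉ P

/-- The positive hull (cone) generated by a set containing `0`:
`coneOf A = ⋃_{t>0} t • A`. -/
def coneOf {d : ℕ} (A : Set (Euc d)) : Set (Euc d) :=
  {y | ∃ t : ℝ, 0 < t ∧ ∃ a ∈ A, y = t • a}

/-- The normal cone of `T` at its face `F`, computed within the ambient subspace `L`. -/
def normalConeIn {d : ℕ} (L : Submodule ℝ (Euc d)) (T F : Set (Euc d)) : Set (Euc d) :=
  {v | v ∈ L ∧ ∀ f ∈ F, ∀ z ∈ T, ⟪v, z - f⟫ ≤ 0}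

/-! ### Auxiliary machinery -/

section Aux

lemma relint_ball {d : ℕ} {s : Set (Euc d)} {x : Euc d} (hx : x ∈ intrinsicInterior ℝ s) :
    ∃ δ > (0:ℝ), ∀ y, y ∈ affineSpan ℝ s → ‖y - x‖ < δ → y ∈ s := by
  obtain ⟨z, hz, rfl⟩ := hx
  rw [mem_interior_iff_mem_nhds, Metric.mem_nhds_iff] at hz
  obtain ⟨δ, hδ, hball⟩ := hz
  refine ⟨δ, hδ, fun y hy hny => ?_⟩
  have : (⟨y, hy⟩ : affineSpan ℝ s) ∈ Metric.ball z δ := by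
    rw [Metric.mem_ball, Subtype.dist_eq, dist_eq_norm]
    exact hny
  exact hball this

lemma relint_push {d : ℕ} {s : Set (Euc d)} {x v : Euc d} (hx : x ∈ intrinsicInterior ℝ s)
    (hv : v ∈ (affineSpan ℝ s).direction) : ∃ ε > (0:ℝ), x + ε • v ∈ s := by
  obtain ⟨δ, hδ, hb⟩ := relint_ball hx
  have hxs : x ∈ s := intrinsicInterior_subset hx
  set ε := δ / (2 * (‖v‖ + 1)) with hε
  have hεpos : 0 < ε := by positivity
  refine ⟨ε, hεpos, ?_⟩
  refine hb _ ?_ ?_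
  · have := AffineSubspace.vadd_mem_of_mem_direction
      (Submodule.smul_mem _ ε hv) (subset_affineSpan ℝ s hxs)
    simpa [vadd_eq_add, add_comm] using this
  · rw [add_sub_cancel_left, norm_smul, Real.norm_eq_abs, abs_of_pos hεpos]
    have h1 : ε * ‖v‖ ≤ ε * (‖v‖ + 1) := by nlinarith [norm_nonneg v]
    have h2 : ε * (‖v‖ + 1) = δ / 2 := by
      rw [hε]; field_simp
    linarith

/-- Cone generated by finitely many vectors. -/
def coneGenI {d : ℕ} {ι : Type} [Fintype ι] (r : ι → Euc d) : Set (Euc d) :=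
  {y | ∃ c : ι → ℝ, (∀ i, 0 ≤ c i) ∧ y = ∑ i, c i • r i}

lemma gen_mem' {d : ℕ} {ι : Type} [Fintype ι] [DecidableEq ι] {r : ι → Euc d} (k : ι) :
    r k ∈ coneGenI r := by
  refine ⟨fun i => if i = k then 1 else 0, fun i => by dsimp only; split <;> norm_num, ?_⟩
  rw [Finset.sum_congr rfl (fun i _ => by rw [ite_smul, one_smul, zero_smul])]
  rw [Finset.sum_ite_eq' Finset.univ k r]
  simp

lemma add_mem' {d : ℕ} {ι : Type} [Fintype ι] {r : ι → Euc d} {x y : Euc d}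
    (hx : x ∈ coneGenI r) (hy : y ∈ coneGenI r) : x + y ∈ coneGenI r := by
  obtain ⟨c, hc, rfl⟩ := hx; obtain ⟨c', hc', rfl⟩ := hy
  exact ⟨c + c', fun i => add_nonneg (hc i) (hc' i), by
    rw [← Finset.sum_add_distrib]; simp [add_smul]⟩

lemma smul_mem' {d : ℕ} {ι : Type} [Fintype ι] {r : ι → Euc d} {t : ℝ} (ht : 0 ≤ t) {x : Euc d}
    (hx : x ∈ coneGenI r) : t • x ∈ coneGenI r := by
  obtain ⟨c, hc, rfl⟩ := hx
  exact ⟨fun i => t * c i, fun i => mul_nonneg ht (hc i), by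
    rw [Finset.smul_sum]; simp [smul_smul]⟩

lemma zero_mem' {d : ℕ} {ι : Type} [Fintype ι] {r : ι → Euc d} : (0:Euc d) ∈ coneGenI r :=
  ⟨fun _ => 0, fun _ => le_refl _, by simp⟩

lemma subset_of' {d : ℕ} {ι : Type} [Fintype ι] {r : ι → Euc d} {S : Set (Euc d)}
    (h0 : (0:Euc d) ∈ S)
    (hadd : ∀ x ∈ S, ∀ y ∈ S, x + y ∈ S)
    (hsmul : ∀ t : ℝ, 0 ≤ t → ∀ x ∈ S, t • x ∈ S)
    (hgen : ∀ k, r k ∈ S) : coneGenI r ⊆ S := by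
  rintro y ⟨c, hc, rfl⟩
  refine Finset.sum_induction _ (· ∈ S) (fun a b ha hb => hadd a ha b hb) h0 ?_
  exact fun i _ => hsmul (c i) (hc i) (r i) (hgen i)

lemma univ_coneGen {d : ℕ} :
    (Set.univ : Set (Euc d)) = coneGenI (fun p : Fin d × Bool =>
      EuclideanSpace.single p.1 (cond p.2 (1:ℝ) (-1))) := by
  apply Set.eq_of_subset_of_subset
  · intro y _
    refine ⟨fun p => cond p.2 (max (y p.1) 0) (max (-(y p.1)) 0), ?_, ?_⟩
    · rintro ⟨i, b⟩; cases b <;> simp [le_max_right]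
    · have hneg : ∀ i : Fin d, EuclideanSpace.single i (-1:ℝ) = -EuclideanSpace.single i 1 := by
        intro i; ext j; simp [EuclideanSpace.single_apply]; split <;> simp
      rw [Fintype.sum_prod_type]
      have : ∀ i : Fin d, (∑ b : Bool, (cond b (max (y i) 0) (max (-(y i)) 0)) •
          EuclideanSpace.single i (cond b (1:ℝ) (-1))) = y i • EuclideanSpace.single i 1 := by
        intro i
        rw [Fintype.sum_bool]
        simp only [cond_true, cond_false, hneg, smul_neg]
        rw [← sub_eq_add_neg, ← sub_smul, max_zero_sub_max_neg_zero_eq_self]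
      rw [Finset.sum_congr rfl (fun i _ => this i)]
      ext j
      rw [WithLp.ofLp_sum, Fintype.sum_apply]
      simp [EuclideanSpace.single_apply]
  · exact fun y _ => Set.mem_univ y

lemma sum_split {d : ℕ} {ι : Type} [Fintype ι] [DecidableEq ι] (r : ι → Euc d) (c : ι → ℝ)
    {i j : ι} (hij : i ≠ j) :
    ∑ k, c k • r k = c i • r i + c j • r j + ∑ k ∈ (Finset.univ.erase j).erase i, c k • r k := by
  rw [← Finset.add_sum_erase _ _ (Finset.mem_univ j)]
  rw [← Finset.add_sum_erase _ (fun k => c k • r k) (Finset.mem_erase.2 ⟨hij, Finset.mem_univ i⟩)]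
  abel

set_option maxHeartbeats 1000000 in
lemma dd_step {d : ℕ} {ι : Type} [Fintype ι] [DecidableEq ι] (r : ι → Euc d) (a : Euc d) :
    ∃ (κ : Type) (_ : Fintype κ) (r' : κ → Euc d),
      coneGenI r ∩ {y | ⟪a, y⟫ ≤ 0} = coneGenI r' := by
  classical
  set r' : ι ⊕ ι × ι → Euc d := Sum.elim
      (fun i => if ⟪a, r i⟫ ≤ 0 then r i else 0)
      (fun p => if ⟪a, r p.1⟫ < 0 ∧ 0 < ⟪a, r p.2⟫ then
         (-⟪a, r p.1⟫) • r p.2 + ⟪a, r p.2⟫ • r p.1 else 0) with hr'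
  refine ⟨ι ⊕ ι × ι, inferInstance, r', Set.eq_of_subset_of_subset ?_ ?_⟩
  · rintro y ⟨⟨c, hc, rfl⟩, hy⟩
    revert hy
    have main : ∀ (m : ℕ) (c : ι → ℝ), (∀ i, 0 ≤ c i) →
        ((Finset.univ.filter fun i => c i ≠ 0).card ≤ m) →
        ⟪a, ∑ i, c i • r i⟫ ≤ 0 → (∑ i, c i • r i) ∈ coneGenI r' := by
      intro m
      induction m with
      | zero =>
        intro c hc hcard _
        have : ∀ i, c i = 0 := by
          intro i
          by_contra hne
          have h1 : i ∈ Finset.univ.filter fun i => c i ≠ 0 :=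
            Finset.mem_filter.2 ⟨Finset.mem_univ i, hne⟩
          have := Finset.card_pos.2 ⟨i, h1⟩
          omega
        rw [Finset.sum_congr rfl fun i _ => by rw [this i, zero_smul]]
        simpa using zero_mem' (r := r')
      | succ m ih =>
        intro c hc hcard hin
        by_cases hj : ∃ j, 0 < c j ∧ 0 < ⟪a, r j⟫
        · obtain ⟨j, hcj, hβ⟩ := hj
          have hsum : ∑ k, c k * ⟪a, r k⟫ ≤ 0 := by
            calc ∑ k, c k * ⟪a, r k⟫ = ⟪a, ∑ i, c i • r i⟫ := by
                  rw [inner_sum]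
                  exact Finset.sum_congr rfl fun k _ => by rw [real_inner_smul_right]
              _ ≤ 0 := hin
          have hex : ∃ i, c i * ⟪a, r i⟫ < 0 := by
            by_contra h; push_neg at h
            have h1 := Finset.single_le_sum (f := fun k => c k * ⟪a, r k⟫)
              (fun k _ => h k) (Finset.mem_univ j)
            nlinarith
          obtain ⟨i, hi⟩ := hex
          have hci : 0 < c i := by
            rcases lt_or_eq_of_le (hc i) with h | h
            · exact h
            · exfalso; rw [← h] at hi; simp at hi
          have hα : ⟪a, r i⟫ < 0 := by nlinarith [hc i]
          have hij : i ≠ j := by rintro rfl; nlinarith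
          have hg' : r' (Sum.inr (i, j)) = (-⟪a, r i⟫) • r j + ⟪a, r j⟫ • r i := by
            simp only [hr', Sum.elim_inr]
            rw [if_pos ⟨hα, hβ⟩]
          set α : ℝ := -⟪a, r i⟫ with hαdef
          have hαpos : 0 < α := by rw [hαdef]; linarith
          set β : ℝ := ⟪a, r j⟫ with hβdef
          set g : Euc d := α • r j + β • r i with hgdef
          have hag : ⟪a, g⟫ = 0 := by
            rw [hgdef, inner_add_right, real_inner_smul_right, real_inner_smul_right,
              ← hβdef]
            rw [hαdef]; ring
          have hgmem : g ∈ coneGenI r' := hg' ▸ gen_mem' (Sum.inr (i, j))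
          by_cases hcase : c j * β ≤ c i * α
          · set c' : ι → ℝ := Function.update (Function.update c j 0) i (c i - c j * β / α)
              with hc'def
            have hc'i : c' i = c i - c j * β / α := by simp [hc'def]
            have hc'j : c' j = 0 := by
              rw [hc'def, Function.update_of_ne hij.symm, Function.update_self]
            have hc'k : ∀ k, k ≠ i → k ≠ j → c' k = c k := by
              intro k hki hkj
              rw [hc'def, Function.update_of_ne hki, Function.update_of_ne hkj]
            have hvnonneg : 0 ≤ c i - c j * β / α := by
              rw [sub_nonneg, div_le_iff₀ hαpos]; linarith
            have hc'nonneg : ∀ k, 0 ≤ c' k := by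
              intro k
              by_cases h1 : k = i
              · rw [h1, hc'i]; exact hvnonneg
              · by_cases h2 : k = j
                · rw [h2, hc'j]
                · rw [hc'k k h1 h2]; exact hc k
            have hrest : ∑ k ∈ (Finset.univ.erase j).erase i, c' k • r k
                = ∑ k ∈ (Finset.univ.erase j).erase i, c k • r k := by
              refine Finset.sum_congr rfl fun k hk => ?_
              have hki : k ≠ i := (Finset.mem_erase.1 hk).1
              have hkj : k ≠ j := (Finset.mem_erase.1 (Finset.mem_of_mem_erase hk)).1
              rw [hc'k k hki hkj]
            have hkey : ∑ k, c k • r k = (c j / α) • g + ∑ k, c' k • r k := by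
              rw [sum_split r c hij, sum_split r c' hij, hc'i, hc'j, hrest, hgdef]
              match_scalars <;> field_simp <;> ring
            have hinv : ⟪a, ∑ k, c' k • r k⟫ ≤ 0 := by
              have heq : ∑ k, c' k • r k = ∑ k, c k • r k - (c j / α) • g := by
                rw [hkey]; abel
              rw [heq, inner_sub_right, real_inner_smul_right, hag]
              linarith
            have hcard' : (Finset.univ.filter fun k => c' k ≠ 0).card ≤ m := by
              have hsub : (Finset.univ.filter fun k => c' k ≠ 0)
                  ⊆ (Finset.univ.filter fun k => c k ≠ 0).erase j := by
                intro k hk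
                have hk' : c' k ≠ 0 := (Finset.mem_filter.1 hk).2
                have hkj : k ≠ j := by rintro rfl; exact hk' hc'j
                refine Finset.mem_erase.2 ⟨hkj, Finset.mem_filter.2 ⟨Finset.mem_univ k, ?_⟩⟩
                by_cases h1 : k = i
                · rw [h1]; exact hci.ne'
                · rw [← hc'k k h1 hkj]; exact hk'
              have hjm : j ∈ Finset.univ.filter fun k => c k ≠ 0 :=
                Finset.mem_filter.2 ⟨Finset.mem_univ j, hcj.ne'⟩
              have := Finset.card_le_card hsub
              rw [Finset.card_erase_of_mem hjm] at this
              omega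
            rw [hkey]
            exact add_mem' (smul_mem' (div_nonneg hcj.le hαpos.le) hgmem)
              (ih c' hc'nonneg hcard' hinv)
          · push_neg at hcase
            set c' : ι → ℝ := Function.update (Function.update c i 0) j (c j - c i * α / β)
              with hc'def
            have hc'j : c' j = c j - c i * α / β := by simp [hc'def]
            have hc'i : c' i = 0 := by
              rw [hc'def, Function.update_of_ne hij, Function.update_self]
            have hc'k : ∀ k, k ≠ i → k ≠ j → c' k = c k := by
              intro k hki hkj
              rw [hc'def, Function.update_of_ne hkj, Function.update_of_ne hki]
            have hvnonneg : 0 ≤ c j - c i * α / β := by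
              rw [sub_nonneg, div_le_iff₀ hβ]; linarith
            have hc'nonneg : ∀ k, 0 ≤ c' k := by
              intro k
              by_cases h1 : k = i
              · rw [h1, hc'i]
              · by_cases h2 : k = j
                · rw [h2, hc'j]; exact hvnonneg
                · rw [hc'k k h1 h2]; exact hc k
            have hrest : ∑ k ∈ (Finset.univ.erase j).erase i, c' k • r k
                = ∑ k ∈ (Finset.univ.erase j).erase i, c k • r k := by
              refine Finset.sum_congr rfl fun k hk => ?_
              have hki : k ≠ i := (Finset.mem_erase.1 hk).1
              have hkj : k ≠ j := (Finset.mem_erase.1 (Finset.mem_of_mem_erase hk)).1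
              rw [hc'k k hki hkj]
            have hkey : ∑ k, c k • r k = (c i / β) • g + ∑ k, c' k • r k := by
              rw [sum_split r c hij, sum_split r c' hij, hc'i, hc'j, hrest, hgdef]
              match_scalars <;> field_simp <;> ring
            have hinv : ⟪a, ∑ k, c' k • r k⟫ ≤ 0 := by
              have heq : ∑ k, c' k • r k = ∑ k, c k • r k - (c i / β) • g := by
                rw [hkey]; abel
              rw [heq, inner_sub_right, real_inner_smul_right, hag]
              linarith
            have hcard' : (Finset.univ.filter fun k => c' k ≠ 0).card ≤ m := by
              have hsub : (Finset.univ.filter fun k => c' k ≠ 0)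
                  ⊆ (Finset.univ.filter fun k => c k ≠ 0).erase i := by
                intro k hk
                have hk' : c' k ≠ 0 := (Finset.mem_filter.1 hk).2
                have hki : k ≠ i := by rintro rfl; exact hk' hc'i
                refine Finset.mem_erase.2 ⟨hki, Finset.mem_filter.2 ⟨Finset.mem_univ k, ?_⟩⟩
                by_cases h2 : k = j
                · rw [h2]; exact hcj.ne'
                · rw [← hc'k k hki h2]; exact hk'
              have him : i ∈ Finset.univ.filter fun k => c k ≠ 0 :=
                Finset.mem_filter.2 ⟨Finset.mem_univ i, hci.ne'⟩
              have := Finset.card_le_card hsub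
              rw [Finset.card_erase_of_mem him] at this
              omega
            rw [hkey]
            exact add_mem' (smul_mem' (div_nonneg hci.le hβ.le) hgmem)
              (ih c' hc'nonneg hcard' hinv)
        · refine ⟨Sum.elim c (fun _ => 0), ?_, ?_⟩
          · rintro (i | p)
            · exact hc i
            · exact le_refl 0
          · rw [Fintype.sum_sum_type]
            push_neg at hj
            have hz : ∀ p : ι × ι,
                (Sum.elim c (fun _ => (0:ℝ)) (Sum.inr p)) • r' (Sum.inr p) = 0 := by
              intro p; simp
            rw [Finset.sum_congr rfl (fun p _ => hz p), Finset.sum_const_zero, add_zero]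
            refine Finset.sum_congr rfl (fun i _ => ?_)
            by_cases hci : c i = 0
            · simp [hci]
            · have h2 : ⟪a, r i⟫ ≤ 0 := hj i (lt_of_le_of_ne (hc i) (Ne.symm hci))
              simp only [hr', Sum.elim_inl, if_pos h2]
    exact fun hy => main _ c hc (le_refl _) hy
  · refine subset_of' ⟨zero_mem', by simp⟩ ?_ ?_ ?_
    · rintro x ⟨hx1, hx2⟩ y ⟨hy1, hy2⟩
      refine ⟨add_mem' hx1 hy1, ?_⟩
      simp only [Set.mem_setOf_eq, inner_add_right] at *
      linarith
    · rintro t ht x ⟨hx1, hx2⟩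
      refine ⟨smul_mem' ht hx1, ?_⟩
      simp only [Set.mem_setOf_eq, real_inner_smul_right] at *
      exact mul_nonpos_of_nonneg_of_nonpos ht hx2
    · rintro (i | p)
      · simp only [hr', Sum.elim_inl]
        split
        · exact ⟨gen_mem' i, by assumption⟩
        · exact ⟨zero_mem', by simp⟩
      · simp only [hr', Sum.elim_inr]
        split
        · rename_i hcond
          obtain ⟨h1, h2⟩ := hcond
          constructor
          · exact add_mem' (smul_mem' (by linarith) (gen_mem' p.2))
              (smul_mem' (by linarith) (gen_mem' p.1))
          · simp only [Set.mem_setOf_eq, inner_add_right, real_inner_smul_right]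
            nlinarith
        · exact ⟨zero_mem', by simp⟩

/-- Minkowski–Weyl, one direction: an H-cone is finitely generated. -/
lemma poly_fg {d : ℕ} (A : Finset (Euc d)) :
    ∃ (κ : Type) (_ : Fintype κ) (r : κ → Euc d),
      {y : Euc d | ∀ a ∈ A, ⟪a, y⟫ ≤ 0} = coneGenI r := by
  classical
  induction A using Finset.induction_on with
  | empty =>
    refine ⟨Fin d × Bool, inferInstance,
      (fun p : Fin d × Bool => EuclideanSpace.single p.1 (cond p.2 (1:ℝ) (-1))), ?_⟩
    rw [← univ_coneGen]
    ext y; simp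
  | @insert a A ha ih =>
    obtain ⟨κ, hκ, r, hr⟩ := ih
    obtain ⟨κ', hκ', r', hr'⟩ := @dd_step d κ hκ (Classical.decEq κ) r a
    refine ⟨κ', hκ', r', ?_⟩
    have hsplit : {y : Euc d | ∀ b ∈ insert a A, ⟪b, y⟫ ≤ 0}
        = {y : Euc d | ∀ b ∈ A, ⟪b, y⟫ ≤ 0} ∩ {y | ⟪a, y⟫ ≤ 0} := by
      ext y
      simp only [Set.mem_setOf_eq, Finset.mem_insert, Set.mem_inter_iff]
      constructor
      · intro h
        exact ⟨fun b hb => h b (Or.inr hb), h a (Or.inl rfl)⟩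
      · rintro ⟨h1, h2⟩ b hb
        rcases hb with rfl | hb
        · exact h2
        · exact h1 b hb
    rw [hsplit, hr, hr']

lemma finmin {γ : Type*} (T : Finset γ) (f : γ → ℝ) (hf : ∀ p ∈ T, 0 < f p) :
    ∃ t : ℝ, 0 < t ∧ t ≤ 1 ∧ ∀ p ∈ T, t ≤ f p := by
  classical
  set T' : Finset ℝ := insert 1 (T.image f) with hT'
  have hne : T'.Nonempty := ⟨1, Finset.mem_insert_self _ _⟩
  refine ⟨T'.min' hne, ?_, ?_, ?_⟩
  · rw [Finset.lt_min'_iff]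
    rintro b hb
    rcases Finset.mem_insert.1 hb with rfl | hb
    · norm_num
    · obtain ⟨p, hp, rfl⟩ := Finset.mem_image.1 hb
      exact hf p hp
  · exact Finset.min'_le _ _ (Finset.mem_insert_self _ _)
  · intro p hp
    exact Finset.min'_le _ _ (Finset.mem_insert_of_mem (Finset.mem_image_of_mem f hp))

lemma face_desc {d : ℕ} {P F : Set (Euc d)} {s : Finset (Euc d × ℝ)}
    (hPs : P = {x : Euc d | ∀ h ∈ s, ⟪h.1, x⟫ ≤ h.2}) (hF : IsFaceOf P F) :
    ∃ I : Finset (Euc d × ℝ), I ⊆ s ∧ F = {x | x ∈ P ∧ ∀ p ∈ I, ⟪p.1, x⟫ = p.2} := by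
  classical
  obtain ⟨y₀, hy₀⟩ := Set.Nonempty.intrinsicInterior hF.2.1 hF.1
  have hy₀F : y₀ ∈ F := intrinsicInterior_subset hy₀
  have hFP : F ⊆ P := hF.2.2.1
  have hy₀P : y₀ ∈ P := hFP hy₀F
  set I : Finset (Euc d × ℝ) := s.filter (fun p => ⟪p.1, y₀⟫ = p.2) with hI
  have hmemP : ∀ x ∈ P, ∀ p ∈ s, ⟪p.1, x⟫ ≤ p.2 := by
    intro x hx p hp; rw [hPs] at hx; exact hx p hp
  refine ⟨I, Finset.filter_subset _ _, Set.eq_of_subset_of_subset ?_ ?_⟩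
  · intro x hx
    refine ⟨hFP hx, fun p hp => ?_⟩
    obtain ⟨hps, hpe⟩ := Finset.mem_filter.1 hp
    have hdir : y₀ - x ∈ (affineSpan ℝ F).direction := by
      have := AffineSubspace.vsub_mem_direction (subset_affineSpan ℝ F hy₀F)
        (subset_affineSpan ℝ F hx)
      simpa using this
    obtain ⟨ε, hε, hy'⟩ := relint_push hy₀ hdir
    have h1 : ⟪p.1, y₀ + ε • (y₀ - x)⟫ ≤ p.2 := hmemP _ (hFP hy') p hps
    rw [inner_add_right, real_inner_smul_right, inner_sub_right, hpe] at h1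
    have h2 : ⟪p.1, x⟫ ≤ p.2 := hmemP x (hFP hx) p hps
    nlinarith
  · rintro z ⟨hzP, hzeq⟩
    obtain ⟨t, ht, ht1, htle⟩ := finmin (s \ I)
      (fun p => (p.2 - ⟪p.1, y₀⟫) / (|⟪p.1, y₀ - z⟫| + 1)) (by
        intro p hp
        obtain ⟨hps, hpI⟩ := Finset.mem_sdiff.1 hp
        have hlt : ⟪p.1, y₀⟫ < p.2 := by
          rcases lt_or_eq_of_le (hmemP y₀ hy₀P p hps) with h | h
          · exact h
          · exact absurd (Finset.mem_filter.2 ⟨hps, h⟩) hpI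
        exact div_pos (by linarith) (by positivity))
    have hz'P : y₀ + t • (y₀ - z) ∈ P := by
      rw [hPs]
      intro p hps
      by_cases hpI : p ∈ I
      · obtain ⟨_, hpe⟩ := Finset.mem_filter.1 hpI
        have hpz : ⟪p.1, z⟫ = p.2 := hzeq p hpI
        rw [inner_add_right, real_inner_smul_right, inner_sub_right, hpe, hpz]
        simp
      · have hle := htle p (Finset.mem_sdiff.2 ⟨hps, hpI⟩)
        have hlt : ⟪p.1, y₀⟫ < p.2 := by
          rcases lt_or_eq_of_le (hmemP y₀ hy₀P p hps) with h | h
          · exact h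
          · exact absurd (Finset.mem_filter.2 ⟨hps, h⟩) hpI
        rw [inner_add_right, real_inner_smul_right]
        have habs : t * ⟪p.1, y₀ - z⟫ ≤ t * |⟪p.1, y₀ - z⟫| :=
          mul_le_mul_of_nonneg_left (le_abs_self _) ht.le
        have hb : t * |⟪p.1, y₀ - z⟫| < p.2 - ⟪p.1, y₀⟫ := by
          have h3 : 0 < |⟪p.1, y₀ - z⟫| + 1 := by positivity
          rw [le_div_iff₀ h3] at hle
          linarith
        linarith
    have hseg : y₀ ∈ openSegment ℝ (y₀ + t • (y₀ - z)) z := by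
      refine ⟨1 / (1 + t), t / (1 + t), by positivity, by positivity, ?_, ?_⟩
      · field_simp
      · match_scalars <;> field_simp <;> ring
    exact hF.2.2.right_mem_of_mem_openSegment hz'P hzP hy₀F hseg

lemma decomp {d : ℕ} {G T : Set (Euc d)} (hT : Convex ℝ T) (hGT : G ⊆ T) {x₁ y : Euc d}
    (hx₁ : x₁ ∈ intrinsicInterior ℝ G) (hy : y ∈ T) :
    ∃ p q : Euc d, p ∈ (affineSpan ℝ G).direction ∧ q ∈ (affineSpan ℝ G).directionᗮ ∧
      q ∈ coneOf ((T - {x₁}) ∩ ((affineSpan ℝ G).directionᗮ : Set (Euc d))) ∧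
      y - x₁ = p + q := by
  set LG := (affineSpan ℝ G).direction
  obtain ⟨p, hp, q, hq, hpq⟩ := LG.exists_add_mem_mem_orthogonal (y - x₁)
  refine ⟨p, q, hp, hq, ?_, hpq⟩
  obtain ⟨ε, hε, hx'⟩ := relint_push hx₁ (Submodule.neg_mem LG hp)
  set lam : ℝ := ε / (1 + ε) with hlam
  have hlam0 : 0 < lam := by positivity
  have hlam1 : lam < 1 := by
    rw [hlam, div_lt_one (by positivity)]; linarith
  have hf'' : lam • y + (1 - lam) • (x₁ + ε • (-p)) ∈ T :=
    hT hy (hGT hx') hlam0.le (by linarith) (by ring)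
  have heq : (lam • y + (1 - lam) • (x₁ + ε • (-p))) - x₁ = lam • q := by
    have hy' : y = x₁ + (p + q) := by rw [← hpq]; abel
    rw [hy', hlam]
    match_scalars <;> field_simp <;> ring
  refine ⟨1 / lam, by positivity, _, ⟨⟨_, hf'', x₁, rfl, rfl⟩, ?_⟩, ?_⟩
  · show (lam • y + (1 - lam) • (x₁ + ε • (-p))) - x₁ ∈ (LGᗮ : Submodule ℝ (Euc d))
    rw [heq]; exact Submodule.smul_mem _ _ hq
  · show q = (1 / lam) • (lam • y + (1 - lam) • (x₁ + ε • (-p)) - x₁)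
    rw [heq, smul_smul, one_div, inv_mul_cancel₀ hlam0.ne', one_smul]

end Aux

set_option maxHeartbeats 4000000 in
theorem local_reduction_to_cones {d : ℕ} (P G H F : Set (Euc d))
    (hP : IsPolyhedral P) (hne : P.Nonempty)
    (hG : IsFaceOf P G) (hH : IsFaceOf P H) (hGH : G ⊆ H) (hGneH : G ≠ H)
    (x₁ x₂ : Euc d) (hx₁ : x₁ ∈ intrinsicInterior ℝ G)
    (hx₂ : -x₂ ∈ intrinsicInterior ℝ (normalCone P H))
    (hF : IsFaceOf P F) (hGF : G ⊆ F) (hFH : F ⊆ H) :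
    ∃ ε > (0 : ℝ), ∀ w : Euc d,
      w ∈ (affineSpan ℝ G).directionᗮ ⊓ (affineSpan ℝ H).direction → ‖w‖ ≤ ε →
      (x₁ + x₂ + w ∈ F - normalCone P F ↔
        w ∈ coneOf ((F - {x₁}) ∩ ((affineSpan ℝ G).directionᗮ : Set (Euc d))) -
          normalConeIn ((affineSpan ℝ G).directionᗮ ⊓ (affineSpan ℝ H).direction)
            (coneOf ((H - {x₁}) ∩ ((affineSpan ℝ G).directionᗮ : Set (Euc d))))
            (coneOf ((F - {x₁}) ∩ ((affineSpan ℝ G).directionᗮ : Set (Euc d))))) := by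
  classical
  obtain ⟨s, hPs⟩ := hP
  set LG : Submodule ℝ (Euc d) := (affineSpan ℝ G).direction with hLGdef
  set L₂ : Submodule ℝ (Euc d) := (affineSpan ℝ H).direction with hL₂def
  set Fs : Set (Euc d) := coneOf ((F - {x₁}) ∩ (LGᗮ : Set (Euc d))) with hFsdef
  set Hs : Set (Euc d) := coneOf ((H - {x₁}) ∩ (LGᗮ : Set (Euc d))) with hHsdef
  set N₃ : Set (Euc d) := normalConeIn (LGᗮ ⊓ L₂) Hs Fs with hN₃def
  have hx₁G : x₁ ∈ G := intrinsicInterior_subset hx₁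
  have hFP : F ⊆ P := hF.2.2.1
  have hHP : H ⊆ P := hH.2.2.1
  have hx₁F : x₁ ∈ F := hGF hx₁G
  have hx₁H : x₁ ∈ H := hGH hx₁G
  have hx₁P : x₁ ∈ P := hFP hx₁F
  set u₀ : Euc d := -x₂ with hu₀def
  have hu₀N : u₀ ∈ normalCone P H := intrinsicInterior_subset hx₂
  have hmemP : ∀ x ∈ P, ∀ p ∈ s, ⟪p.1, x⟫ ≤ p.2 := by
    intro x hx p hp; rw [hPs] at hx; exact hx p hp
  have hLGle : LG ≤ L₂ := AffineSubspace.direction_le (affineSpan_mono ℝ hGH)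
  have hL₂mem : ∀ a b : Euc d, a ∈ H → b ∈ H → a - b ∈ L₂ := by
    intro a b ha hb
    have := AffineSubspace.vsub_mem_direction (subset_affineSpan ℝ H ha)
      (subset_affineSpan ℝ H hb)
    simpa using this
  -- every normal vector at H is orthogonal to the direction of H
  have horth : ∀ u ∈ normalCone P H, ∀ y ∈ L₂, ⟪u, y⟫ = 0 := by
    intro u hu y hy
    rw [hL₂def, direction_affineSpan, vectorSpan_def] at hy
    induction hy using Submodule.span_induction with
    | mem g hg =>
      obtain ⟨A, hA, B, hB, hab⟩ := hg
      have h1 : ⟪u, A - B⟫ ≤ 0 := hu B hB A (hHP hA)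
      have h2 : ⟪u, B - A⟫ ≤ 0 := hu A hA B (hHP hB)
      rw [inner_sub_right] at h1 h2
      have hg' : g = A - B := by rw [← hab]; rfl
      rw [hg', inner_sub_right]
      linarith
    | zero => simp
    | add y z _ _ hy hz => rw [inner_add_right, hy, hz]; ring
    | smul t y _ hy => rw [real_inner_smul_right, hy]; ring
  -- descriptions of the faces H and F
  obtain ⟨IH, hIHs, hHdesc⟩ := face_desc hPs hH
  obtain ⟨IF, hIFs, hFdesc⟩ := face_desc hPs hF
  have hHeq : ∀ x ∈ H, ∀ p ∈ IH, ⟪p.1, x⟫ = p.2 := by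
    intro x hx; rw [hHdesc] at hx; exact hx.2
  have hHin : ∀ z, z ∈ P → (∀ p ∈ IH, ⟪p.1, z⟫ = p.2) → z ∈ H := by
    intro z h1 h2; rw [hHdesc]; exact ⟨h1, h2⟩
  have hFeq : ∀ x ∈ F, ∀ p ∈ IF, ⟪p.1, x⟫ = p.2 := by
    intro x hx; rw [hFdesc] at hx; exact hx.2
  have hFin : ∀ z, z ∈ P → (∀ p ∈ IF, ⟪p.1, z⟫ = p.2) → z ∈ F := by
    intro z h1 h2; rw [hFdesc]; exact ⟨h1, h2⟩
  -- H is the face of P exposed by u₀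
  have claimE : ∀ z ∈ P, ⟪u₀, z - x₁⟫ = 0 → z ∈ H := by
    intro z hz hz0
    refine hHin z hz ?_
    intro p hp
    have hpN : p.1 ∈ normalCone P H := by
      intro f hf z' hz'
      have h1 := hmemP z' hz' p (hIHs hp)
      have h2 := hHeq f hf p hp
      rw [inner_sub_right]; linarith
    have hdir : u₀ - p.1 ∈ (affineSpan ℝ (normalCone P H)).direction := by
      have := AffineSubspace.vsub_mem_direction
        (subset_affineSpan ℝ _ hu₀N) (subset_affineSpan ℝ _ hpN)
      simpa using this
    obtain ⟨η, hη, hu'⟩ := relint_push hx₂ hdir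
    have h3 := hu' x₁ hx₁H z hz
    rw [inner_add_left, real_inner_smul_left, inner_sub_left, hz0] at h3
    have h4 : 0 ≤ ⟪p.1, z - x₁⟫ := by nlinarith
    have h5 := hmemP z hz p (hIHs hp)
    have h6 : ⟪p.1, x₁⟫ = p.2 := hHeq x₁ hx₁H p hp
    rw [inner_sub_right] at h4; linarith
  -- the tangent cone of P at x₁
  set Is : Finset (Euc d × ℝ) := s.filter (fun p => ⟪p.1, x₁⟫ = p.2) with hIsdef
  have hKup : ∀ z ∈ P, ∀ p ∈ Is, ⟪p.1, z - x₁⟫ ≤ 0 := by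
    intro z hz p hp
    obtain ⟨hps, hpe⟩ := Finset.mem_filter.1 hp
    have := hmemP z hz p hps
    rw [inner_sub_right]; linarith
  have hKdown : ∀ y : Euc d, (∀ p ∈ Is, ⟪p.1, y⟫ ≤ 0) → ∃ δ > (0:ℝ), x₁ + δ • y ∈ P := by
    intro y hy
    obtain ⟨δ, hδ, _, hδle⟩ := finmin (s \ Is)
      (fun p => (p.2 - ⟪p.1, x₁⟫) / (|⟪p.1, y⟫| + 1)) (by
        intro p hp
        obtain ⟨hps, hpI⟩ := Finset.mem_sdiff.1 hp
        have hlt : ⟪p.1, x₁⟫ < p.2 := by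
          rcases lt_or_eq_of_le (hmemP x₁ hx₁P p hps) with h | h
          · exact h
          · exact absurd (Finset.mem_filter.2 ⟨hps, h⟩) hpI
        exact div_pos (by linarith) (by positivity))
    refine ⟨δ, hδ, ?_⟩
    rw [hPs]
    intro p hps
    by_cases hpI : p ∈ Is
    · obtain ⟨_, hpe⟩ := Finset.mem_filter.1 hpI
      have := hy p hpI
      rw [inner_add_right, real_inner_smul_right, hpe]
      nlinarith
    · have hle := hδle p (Finset.mem_sdiff.2 ⟨hps, hpI⟩)
      have hlt : ⟪p.1, x₁⟫ < p.2 := by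
        rcases lt_or_eq_of_le (hmemP x₁ hx₁P p hps) with h | h
        · exact h
        · exact absurd (Finset.mem_filter.2 ⟨hps, h⟩) hpI
      rw [inner_add_right, real_inner_smul_right]
      have habs : δ * ⟪p.1, y⟫ ≤ δ * |⟪p.1, y⟫| :=
        mul_le_mul_of_nonneg_left (le_abs_self _) hδ.le
      have h3 : (0:ℝ) < |⟪p.1, y⟫| + 1 := by positivity
      rw [le_div_iff₀ h3] at hle
      nlinarith
  -- finitely many generators for the tangent cone
  obtain ⟨κ, hκfin, r, hKr⟩ := poly_fg (Is.image Prod.fst)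
  have hKiff : ∀ y : Euc d, (∀ p ∈ Is, ⟪p.1, y⟫ ≤ 0) ↔ y ∈ coneGenI r := by
    intro y
    rw [← hKr]
    simp only [Set.mem_setOf_eq]
    constructor
    · rintro h a ha
      obtain ⟨p, hp, rfl⟩ := Finset.mem_image.1 ha
      exact h p hp
    · intro h p hp
      exact h p.1 (Finset.mem_image_of_mem Prod.fst hp)
  have hrK : ∀ k : κ, ∀ p ∈ Is, ⟪p.1, r k⟫ ≤ 0 := by
    intro k
    refine (hKiff (r k)).2 ?_
    exact @gen_mem' d κ hκfin (Classical.decEq κ) r k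
  have hu₀r : ∀ k : κ, ⟪u₀, r k⟫ ≤ 0 := by
    intro k
    obtain ⟨δ, hδ, hmem⟩ := hKdown (r k) (hrK k)
    have h1 := hu₀N x₁ hx₁H _ hmem
    rw [add_sub_cancel_left, real_inner_smul_right] at h1
    nlinarith
  -- membership facts for the star cones
  have h0Fs : (0:Euc d) ∈ Fs :=
    ⟨1, one_pos, 0, ⟨Set.mem_sub.2 ⟨x₁, hx₁F, x₁, rfl, sub_self x₁⟩, Submodule.zero_mem _⟩,
      (smul_zero 1).symm⟩
  have h0Hs : (0:Euc d) ∈ Hs :=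
    ⟨1, one_pos, 0, ⟨Set.mem_sub.2 ⟨x₁, hx₁H, x₁, rfl, sub_self x₁⟩, Submodule.zero_mem _⟩,
      (smul_zero 1).symm⟩
  have hFsHs : Fs ⊆ Hs := by
    rintro y ⟨t, ht, a, ⟨ha1, ha2⟩, rfl⟩
    obtain ⟨b, hb, c, hc, hbc⟩ := Set.mem_sub.1 ha1
    exact ⟨t, ht, a, ⟨Set.mem_sub.2 ⟨b, hFH hb, c, hc, hbc⟩, ha2⟩, rfl⟩
  -- elements of N₃ are nonpositive on Hs and nonnegative against Fs differences
  have hN₃Hs : ∀ v ∈ N₃, ∀ z ∈ Hs, ⟪v, z⟫ ≤ 0 := by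
    intro v hv z hz
    have := hv.2 0 h0Fs z hz
    rwa [sub_zero] at this
  have hN₃Fs : ∀ v ∈ N₃, ∀ q ∈ Fs, 0 ≤ ⟪v, q⟫ := by
    intro v hv q hq
    have := hv.2 q hq 0 h0Hs
    rw [zero_sub, inner_neg_right] at this
    linarith
  -- the margin ε₀ coming from the generators
  obtain ⟨ε₀, hε₀, hε₀1, hε₀le⟩ := finmin
    ((Finset.univ : Finset κ).filter (fun k => ⟪u₀, r k⟫ < 0))
    (fun k => (-⟪u₀, r k⟫) / (‖r k‖ + 1)) (by
      intro k hk
      have := (Finset.mem_filter.1 hk).2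
      exact div_pos (by linarith) (by positivity))
  -- key estimate: u₀ + v is nonpositive on every generator
  have hvr : ∀ v ∈ N₃, ‖v‖ ≤ ε₀ → ∀ k : κ, ⟪u₀ + v, r k⟫ ≤ 0 := by
    intro v hv hvn k
    by_cases hneg : ⟪u₀, r k⟫ < 0
    · have hle := hε₀le k (Finset.mem_filter.2 ⟨Finset.mem_univ k, hneg⟩)
      have h1 : ⟪v, r k⟫ ≤ ‖v‖ * ‖r k‖ := real_inner_le_norm v (r k)
      have h2 : ‖v‖ * ‖r k‖ ≤ ε₀ * ‖r k‖ :=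
        mul_le_mul_of_nonneg_right hvn (norm_nonneg _)
      have h4 : (0:ℝ) < ‖r k‖ + 1 := by positivity
      rw [le_div_iff₀ h4] at hle
      have h5 : ε₀ * ‖r k‖ ≤ -⟪u₀, r k⟫ := by nlinarith
      rw [inner_add_left]
      linarith
    · have hz : ⟪u₀, r k⟫ = 0 := le_antisymm (hu₀r k) (not_lt.1 hneg)
      obtain ⟨δ, hδ, hmem⟩ := hKdown (r k) (hrK k)
      have hzH : x₁ + δ • r k ∈ H := by
        refine claimE _ hmem ?_
        rw [add_sub_cancel_left, real_inner_smul_right, hz]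
        ring
      obtain ⟨p, q, hp, hq, hqHs, hpq⟩ := decomp hH.2.1 hGH hx₁ hzH
      rw [add_sub_cancel_left] at hpq
      have hvp : ⟪v, p⟫ = 0 := by
        have := (Submodule.mem_orthogonal LG v).1 (Submodule.mem_inf.1 hv.1).1 p hp
        rw [real_inner_comm] at this
        exact this
      have hvq : ⟪v, q⟫ ≤ 0 := hN₃Hs v hv q hqHs
      have h6 : δ * ⟪v, r k⟫ ≤ 0 := by
        have : ⟪v, δ • r k⟫ = ⟪v, p⟫ + ⟪v, q⟫ := by rw [hpq, inner_add_right]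
        rw [real_inner_smul_right] at this
        linarith
      have h7 : ⟪v, r k⟫ ≤ 0 := by nlinarith
      rw [inner_add_left, hz]
      linarith
  -- the margin δF for entering the face F
  obtain ⟨δF, hδF, hδF1, hδFle⟩ := finmin (s.filter (fun p => ⟪p.1, x₁⟫ ≠ p.2))
    (fun p => (p.2 - ⟪p.1, x₁⟫) / (‖p.1‖ + 1)) (by
      intro p hp
      obtain ⟨hps, hpne⟩ := Finset.mem_filter.1 hp
      have h2 : ⟪p.1, x₁⟫ < p.2 := lt_of_le_of_ne (hmemP x₁ hx₁P p hps) hpne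
      exact div_pos (by linarith) (by positivity))
  have hstep1 : ∀ u ∈ Fs, ‖u‖ ≤ δF → x₁ + u ∈ F := by
    rintro u ⟨t, ht, a, ⟨ha1, ha2⟩, rfl⟩ hun
    obtain ⟨fa, hfa, c, hc, hfac⟩ := Set.mem_sub.1 ha1
    rw [Set.mem_singleton_iff] at hc
    rw [hc] at hfac
    have hfaP : fa ∈ P := hFP hfa
    have huP : x₁ + t • a ∈ P := by
      rw [hPs]
      intro p hps
      rw [inner_add_right, real_inner_smul_right]
      by_cases he : ⟪p.1, x₁⟫ = p.2
      · have h1 : ⟪p.1, a⟫ = ⟪p.1, fa⟫ - ⟪p.1, x₁⟫ := by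
          rw [← hfac, inner_sub_right]
        have h2 := hmemP fa hfaP p hps
        have h3 : ⟪p.1, a⟫ ≤ 0 := by rw [h1, he]; linarith
        nlinarith
      · have hle := hδFle p (Finset.mem_filter.2 ⟨hps, he⟩)
        have hlt : ⟪p.1, x₁⟫ < p.2 :=
          lt_of_le_of_ne (hmemP x₁ hx₁P p hps) he
        have h4 : ⟪p.1, t • a⟫ ≤ ‖p.1‖ * ‖t • a‖ := real_inner_le_norm _ _
        have h5 : ‖p.1‖ * ‖t • a‖ ≤ ‖p.1‖ * δF :=
          mul_le_mul_of_nonneg_left hun (norm_nonneg _)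
        have h6 : (0:ℝ) < ‖p.1‖ + 1 := by positivity
        rw [le_div_iff₀ h6] at hle
        rw [real_inner_smul_right] at h4
        nlinarith
    refine hFin _ huP ?_
    intro p hp
    have h7 : ⟪p.1, x₁⟫ = p.2 := hFeq x₁ hx₁F p hp
    have h8 : ⟪p.1, fa⟫ = p.2 := hFeq fa hfa p hp
    have h9 : ⟪p.1, a⟫ = 0 := by
      rw [← hfac, inner_sub_right, h7, h8]; ring
    rw [inner_add_right, real_inner_smul_right, h7, h9]
    ring
  -- conclusion
  refine ⟨min δF ε₀, lt_min hδF hε₀, ?_⟩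
  intro w hw hwn
  obtain ⟨hwL₁, hwL₂⟩ := Submodule.mem_inf.1 hw
  constructor
  · -- forward direction
    rintro hmem
    obtain ⟨f, hf, n, hn, heq⟩ := Set.mem_sub.1 hmem
    obtain ⟨p, q, hp, hq, hqFs, hpq⟩ := decomp hF.2.1 hGF hx₁ hf
    refine Set.mem_sub.2 ⟨q, hqFs, q - w, ?_, by abel⟩
    have hqL₂ : q ∈ L₂ := by
      have h1 : f - x₁ ∈ L₂ := hL₂mem f x₁ (hFH hf) hx₁H
      have h2 : q = (f - x₁) - p := by rw [hpq]; abel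
      rw [h2]; exact Submodule.sub_mem _ h1 (hLGle hp)
    have hv'L : q - w ∈ LGᗮ ⊓ L₂ := Submodule.mem_inf.2
      ⟨Submodule.sub_mem _ hq hwL₁, Submodule.sub_mem _ hqL₂ hwL₂⟩
    have hm : n + x₂ = p + (q - w) := by
      have h2 : n = f - (x₁ + x₂ + w) := by rw [← heq]; abel
      rw [h2]
      have h3 : f = x₁ + (p + q) := by rw [← hpq]; abel
      rw [h3]; abel
    refine ⟨hv'L, ?_⟩
    rintro φ ⟨t₁, ht₁, a₁, ⟨ha₁s, ha₁L⟩, rfl⟩ z ⟨t₂, ht₂, a₂, ⟨ha₂s, ha₂L⟩, rfl⟩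
    obtain ⟨f₁, hf₁, c₁, hc₁, hfc₁⟩ := Set.mem_sub.1 ha₁s
    rw [Set.mem_singleton_iff] at hc₁
    rw [hc₁] at hfc₁
    obtain ⟨h₁, hh₁, c₂, hc₂, hhc₂⟩ := Set.mem_sub.1 ha₂s
    rw [Set.mem_singleton_iff] at hc₂
    rw [hc₂] at hhc₂
    have hqw : q - w = (n + x₂) - p := by rw [hm]; abel
    have hsubL₁ : t₂ • a₂ - t₁ • a₁ ∈ LGᗮ :=
      Submodule.sub_mem _ (Submodule.smul_mem _ _ ha₂L) (Submodule.smul_mem _ _ ha₁L)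
    have hsubL₂ : t₂ • a₂ - t₁ • a₁ ∈ L₂ := by
      refine Submodule.sub_mem _ (Submodule.smul_mem _ _ ?_) (Submodule.smul_mem _ _ ?_)
      · rw [← hhc₂]; exact hL₂mem h₁ x₁ hh₁ hx₁H
      · rw [← hfc₁]; exact hL₂mem f₁ x₁ (hFH hf₁) hx₁H
    have hxp2 : ⟪x₂, t₂ • a₂ - t₁ • a₁⟫ = 0 := by
      have := horth u₀ hu₀N _ hsubL₂
      rw [hu₀def, inner_neg_left] at this
      linarith
    have hpz : ⟪p, t₂ • a₂ - t₁ • a₁⟫ = 0 :=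
      (Submodule.mem_orthogonal LG _).1 hsubL₁ p hp
    have hn1 : ⟪n, a₂⟫ ≤ 0 := by
      have h4 := hn x₁ hx₁F h₁ (hHP hh₁)
      rw [← hhc₂]; exact h4
    have hn2 : ⟪n, a₁⟫ = 0 := by
      have hA := hn x₁ hx₁F f₁ (hFP hf₁)
      have hB := hn f₁ hf₁ x₁ hx₁P
      rw [← hfc₁]
      have h5 : x₁ - f₁ = -(f₁ - x₁) := by abel
      rw [h5, inner_neg_right] at hB
      linarith
    have hexp : ⟪q - w, t₂ • a₂ - t₁ • a₁⟫
        = ⟪n, t₂ • a₂ - t₁ • a₁⟫ + ⟪x₂, t₂ • a₂ - t₁ • a₁⟫ - ⟪p, t₂ • a₂ - t₁ • a₁⟫ := by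
      rw [hqw, inner_sub_left, inner_add_left]
    rw [hexp, hxp2, hpz]
    rw [inner_sub_right, real_inner_smul_right, real_inner_smul_right]
    nlinarith
  · -- backward direction
    rintro hmem
    obtain ⟨u, hu, v, hv, huv⟩ := Set.mem_sub.1 hmem
    have hvu : ⟪v, u⟫ ≤ 0 := hN₃Hs v hv u (hFsHs hu)
    have hnormsq : ‖u‖^2 + ‖v‖^2 ≤ ‖w‖^2 := by
      have h1 : ‖u - v‖^2 = ‖u‖^2 - 2 * ⟪u, v⟫ + ‖v‖^2 := norm_sub_sq_real u v
      rw [← huv, h1]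
      have h2 : ⟪u, v⟫ = ⟪v, u⟫ := real_inner_comm v u
      nlinarith
    have hwε : ‖w‖ ≤ min δF ε₀ := hwn
    have hun : ‖u‖ ≤ δF := by
      have h2 : ‖w‖ ≤ δF := le_trans hwε (min_le_left _ _)
      nlinarith [norm_nonneg u, norm_nonneg v, norm_nonneg w]
    have hvn : ‖v‖ ≤ ε₀ := by
      have h2 : ‖w‖ ≤ ε₀ := le_trans hwε (min_le_right _ _)
      nlinarith [norm_nonneg u, norm_nonneg v, norm_nonneg w]
    have hfF : x₁ + u ∈ F := hstep1 u hu hun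
    have hnN : v - x₂ ∈ normalCone P F := by
      intro f' hf' z hz
      obtain ⟨p', q', hp', hq', hq'Fs, hpq'⟩ := decomp hF.2.1 hGF hx₁ hf'
      have hA1 : 0 ≤ ⟪v - x₂, f' - x₁⟫ := by
        have e1 : ⟪x₂, f' - x₁⟫ = 0 := by
          have e0 := horth u₀ hu₀N _ (hL₂mem f' x₁ (hFH hf') hx₁H)
          rw [hu₀def, inner_neg_left] at e0
          linarith
        have e2 : ⟪v, p'⟫ = 0 := by
          have e0 := (Submodule.mem_orthogonal LG v).1 (Submodule.mem_inf.1 hv.1).1 p' hp'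
          rw [real_inner_comm] at e0
          exact e0
        have e3 : 0 ≤ ⟪v, q'⟫ := hN₃Fs v hv q' hq'Fs
        rw [inner_sub_left, hpq', inner_add_right, e2, inner_add_right]
        rw [hpq', inner_add_right] at e1
        linarith
      have hA2 : ⟪v - x₂, z - x₁⟫ ≤ 0 := by
        have hzK : ∀ p ∈ Is, ⟪p.1, z - x₁⟫ ≤ 0 := fun p hp => hKup z hz p hp
        obtain ⟨c, hc, hceq⟩ := (hKiff (z - x₁)).1 hzK
        have hS : ⟪v - x₂, z - x₁⟫ = ∑ k, c k * ⟪u₀ + v, r k⟫ := by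
          rw [hceq, inner_sum]
          refine Finset.sum_congr rfl fun k _ => ?_
          rw [real_inner_smul_right]
          congr 1
          have h6 : v - x₂ = u₀ + v := by rw [hu₀def]; abel
          rw [h6]
        rw [hS]
        refine Finset.sum_nonpos fun k _ => ?_
        exact mul_nonpos_of_nonneg_of_nonpos (hc k) (hvr v hv hvn k)
      have h7 : z - f' = (z - x₁) - (f' - x₁) := by abel
      rw [h7, inner_sub_right]
      linarith
    refine Set.mem_sub.2 ⟨x₁ + u, hfF, v - x₂, hnN, ?_⟩
    rw [← huv]; abel
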